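/- Let μ_T, μ_W ∈ ℝ^d be i.i.d. N(0, τ²·I_d) and let x = μ_T + ξ with ξ ~ N(0, σ²·I_d) independent of the centers. Then Pr(‖x − μ_W‖² − ‖x − μ_T‖² ≤ 0) ≤ ρ^(d/4), where ρ = (1 + 2τ²/σ²)/(1 + τ²/σ²)². -/

import Mathlib

open MeasureTheory ProbabilityTheory Real Filter
open scoped NNReal ENNReal

lemma intG {K : ℝ} (hK : 0 < K) (l : ℝ) :
    ∫ x : ℝ, Real.exp (-(K*x^2) + l*x) = Real.sqrt (π/K) * Real.exp (l^2/(4*K)) := by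
  have hrw : ∀ x : ℝ, -(K*x^2) + l*x = -K*(x - l/(2*K))^2 + l^2/(4*K) := by
    intro x; field_simp; ring
  simp_rw [hrw, Real.exp_add]
  rw [integral_mul_const]
  have : ∫ x : ℝ, Real.exp (-K * (x - l/(2*K))^2) = ∫ x : ℝ, Real.exp (-K * x^2) :=
    integral_sub_right_eq_self (fun x => Real.exp (-K * x^2)) _
  rw [this, integral_gaussian]

lemma intGI {K : ℝ} (hK : 0 < K) (l : ℝ) :
    Integrable (fun x : ℝ => Real.exp (-(K*x^2) + l*x)) := by
  have hrw : ∀ x : ℝ, -(K*x^2) + l*x = -K*(x - l/(2*K))^2 + l^2/(4*K) := by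
    intro x; field_simp; ring
  simp_rw [hrw, Real.exp_add]
  exact ((integrable_exp_neg_mul_sq hK).comp_sub_right (l/(2*K))).mul_const _

lemma gaussL {v : ℝ} (hv : 0 < v) {k : ℝ} (hk : 0 ≤ k) (l : ℝ) :
    ∫⁻ x : ℝ, ENNReal.ofReal (Real.exp (-(k*x^2) + l*x)) ∂(gaussianReal 0 v.toNNReal)
      = ENNReal.ofReal ((Real.sqrt (1 + 2*k*v))⁻¹ * Real.exp (l^2*v/(2*(1+2*k*v)))) := by
  have hvne : v.toNNReal ≠ 0 := by simp [Real.toNNReal_eq_zero, not_le, hv]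
  have hK : 0 < k + 1/(2*v) := by positivity
  rw [gaussianReal_of_var_ne_zero 0 hvne,
    lintegral_withDensity_eq_lintegral_mul _ (measurable_gaussianPDF _ _)
      (by exact (Real.measurable_exp.comp (by fun_prop)).ennreal_ofReal)]
  have hcv : ((v.toNNReal : ℝ≥0) : ℝ) = v := by simp [Real.coe_toNNReal _ hv.le]
  have hrw : ∀ x : ℝ, (gaussianPDF 0 v.toNNReal * fun x => ENNReal.ofReal (rexp (-(k*x^2) + l*x))) x
      = ENNReal.ofReal ((Real.sqrt (2*π*v))⁻¹ * rexp (-((k + 1/(2*v))*x^2) + l*x)) := by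
    intro x
    simp only [Pi.mul_apply, gaussianPDF, gaussianPDFReal, hcv]
    rw [← ENNReal.ofReal_mul (by positivity)]
    congr 1
    rw [mul_assoc, ← Real.exp_add]
    congr 2
    field_simp; ring
  simp_rw [hrw]
  rw [← ofReal_integral_eq_lintegral_ofReal
      (((intGI hK l).const_mul _)) (Filter.Eventually.of_forall fun x => by positivity)]
  rw [integral_const_mul, intG hK]
  congr 1
  have h1 : 0 < 1 + 2*k*v := by positivity
  have e1 : (Real.sqrt (2*π*v))⁻¹ * Real.sqrt (π/(k + 1/(2*v))) = (Real.sqrt (1+2*k*v))⁻¹ := by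
    rw [← Real.sqrt_inv, ← Real.sqrt_mul (by positivity), ← Real.sqrt_inv]
    congr 1
    field_simp
    ring
  have e2 : l^2/(4*(k + 1/(2*v))) = l^2*v/(2*(1+2*k*v)) := by
    field_simp; ring
  rw [← mul_assoc, e1, e2]

lemma lintegral_pi_prod : ∀ (n : ℕ) (μ : Measure ℝ), IsProbabilityMeasure μ →
    ∀ (g : Fin n → ℝ → ℝ≥0∞), (∀ i, Measurable (g i)) →
    ∫⁻ x : Fin n → ℝ, ∏ i, g i (x i) ∂(Measure.pi fun _ => μ) = ∏ i, ∫⁻ y, g i y ∂μ := by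
  intro n
  induction n with
  | zero =>
      intro μ hμ g hg
      simp only [Finset.univ_eq_empty, Finset.prod_empty, lintegral_one,
        Measure.pi_empty_univ]
  | succ n ih =>
      intro μ hμ g hg
      have h := (measurePreserving_piFinSuccAbove (fun _ : Fin (n+1) => μ) 0).symm
      rw [← h.lintegral_comp_emb (MeasurableEquiv.measurableEmbedding _)]
      simp only [MeasurableEquiv.piFinSuccAbove_symm_apply, Fin.insertNthEquiv,
        Fin.prod_univ_succ, Fin.insertNth_zero, Equiv.coe_fn_mk, Fin.cons_succ,
        Fin.cons_zero, Fin.zero_succAbove, cast_eq, Function.comp_def]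
      rw [lintegral_prod_mul (f := g 0) (g := fun z : Fin n → ℝ => ∏ i, g i.succ (z i))
        (hg 0).aemeasurable
        (Finset.measurable_prod Finset.univ
          (fun i _ => (hg i.succ).comp (measurable_pi_apply i))).aemeasurable]
      rw [ih μ hμ (fun i => g i.succ) (fun i => hg i.succ)]

lemma iIndepFun_congr_ae {Ω ι : Type*} [MeasurableSpace Ω] {P : Measure Ω}
    {β : ι → Type*} {mβ : ∀ i, MeasurableSpace (β i)} {f g : ∀ i, Ω → β i}
    (h : iIndepFun f P) (h' : ∀ i, f i =ᵐ[P] g i) : iIndepFun g P := by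
  rw [iIndepFun_iff_measure_inter_preimage_eq_mul] at h ⊢
  intro S sets H
  have hae : ∀ᵐ ω ∂P, ∀ i ∈ S, f i ω = g i ω :=
    (ae_ball_iff S.countable_toSet).2 fun i _ => h' i
  have h1 : (⋂ i ∈ S, g i ⁻¹' sets i) =ᵐ[P] (⋂ i ∈ S, f i ⁻¹' sets i) := by
    rw [Filter.eventuallyEq_set]
    filter_upwards [hae] with ω hω
    simp only [Set.mem_iInter, Set.mem_preimage]
    exact ⟨fun hgm i hi => (hω i hi) ▸ hgm i hi, fun hfm i hi => (hω i hi) ▸ hfm i hi⟩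
  have h2 : ∀ i ∈ S, P (g i ⁻¹' sets i) = P (f i ⁻¹' sets i) := by
    intro i hi
    refine measure_congr ?_
    rw [Filter.eventuallyEq_set]
    filter_upwards [h' i] with ω hω
    simp only [Set.mem_preimage, hω]
  rw [measure_congr h1, h S H, Finset.prod_congr rfl h2]
section
variable {σ τ : ℝ} (hσ : 0 < σ) (hτ : 0 < τ)

lemma scalar1 (hσ : 0 < σ) (a b : ℝ) :
    ∫⁻ c : ℝ, ENNReal.ofReal (rexp (-(4*σ^2)⁻¹ * ((a + c - b)^2 - c^2)))
        ∂(gaussianReal 0 (σ^2).toNNReal)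
      = ENNReal.ofReal (rexp (-(8*σ^2)⁻¹ * (a-b)^2)) := by
  have hσ2 : (0:ℝ) < σ^2 := by positivity
  have h1 : ∀ c : ℝ, -(4*σ^2)⁻¹ * ((a + c - b)^2 - c^2)
      = (-((0:ℝ)*c^2) + (-2*(4*σ^2)⁻¹*(a-b))*c) + (-(4*σ^2)⁻¹*(a-b)^2) := by
    intro c; field_simp; ring
  have h2 : ∀ c : ℝ, ENNReal.ofReal (rexp (-(4*σ^2)⁻¹ * ((a + c - b)^2 - c^2)))
      = ENNReal.ofReal (rexp (-((0:ℝ)*c^2) + (-2*(4*σ^2)⁻¹*(a-b))*c)) *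
        ENNReal.ofReal (rexp (-(4*σ^2)⁻¹*(a-b)^2)) := by
    intro c; rw [h1 c, Real.exp_add, ENNReal.ofReal_mul (Real.exp_nonneg _)]
  simp_rw [h2]
  rw [lintegral_mul_const _ (by fun_prop),
    gaussL hσ2 le_rfl]
  rw [← ENNReal.ofReal_mul (by positivity)]
  congr 1
  simp only [mul_zero, zero_mul, add_zero, Real.sqrt_one, inv_one, one_mul]
  rw [← Real.exp_add]
  congr 1
  field_simp
  ring

lemma scalar2 (hσ : 0 < σ) (hτ : 0 < τ) (a : ℝ) :
    ∫⁻ b : ℝ, ENNReal.ofReal (rexp (-(8*σ^2)⁻¹ * (a-b)^2)) ∂(gaussianReal 0 (τ^2).toNNReal)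
      = ENNReal.ofReal ((Real.sqrt (1 + 2*(8*σ^2)⁻¹*τ^2))⁻¹ *
          rexp (-((8*σ^2)⁻¹/(1+2*(8*σ^2)⁻¹*τ^2)) * a^2)) := by
  have hτ2 : (0:ℝ) < τ^2 := by positivity
  set α := (8*σ^2)⁻¹ with hα
  have hα0 : 0 < α := by positivity
  have hd : (0:ℝ) < 1 + 2*α*τ^2 := by positivity
  have h1 : ∀ b : ℝ, -α * (a-b)^2 = (-(α*b^2) + (2*α*a)*b) + (-α*a^2) := by
    intro b; ring
  have h2 : ∀ b : ℝ, ENNReal.ofReal (rexp (-α * (a-b)^2))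
      = ENNReal.ofReal (rexp (-(α*b^2) + (2*α*a)*b)) * ENNReal.ofReal (rexp (-α*a^2)) := by
    intro b; rw [h1 b, Real.exp_add, ENNReal.ofReal_mul (Real.exp_nonneg _)]
  simp_rw [h2]
  rw [lintegral_mul_const _ (by fun_prop),
    gaussL hτ2 hα0.le]
  rw [← ENNReal.ofReal_mul (by positivity), mul_assoc, ← Real.exp_add]
  congr 2
  field_simp
  ring

lemma scalar3 (hσ : 0 < σ) (hτ : 0 < τ) :
    ∫⁻ a : ℝ, ENNReal.ofReal ((Real.sqrt (1 + 2*(8*σ^2)⁻¹*τ^2))⁻¹ *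
        rexp (-((8*σ^2)⁻¹/(1+2*(8*σ^2)⁻¹*τ^2)) * a^2)) ∂(gaussianReal 0 (τ^2).toNNReal)
      = ENNReal.ofReal ((Real.sqrt (1 + 2*(8*σ^2)⁻¹*τ^2))⁻¹ *
          (Real.sqrt (1 + 2*((8*σ^2)⁻¹/(1+2*(8*σ^2)⁻¹*τ^2))*τ^2))⁻¹) := by
  have hτ2 : (0:ℝ) < τ^2 := by positivity
  set α := (8*σ^2)⁻¹ with hα
  have hα0 : 0 < α := by positivity
  have hd : (0:ℝ) < 1 + 2*α*τ^2 := by positivity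
  set β := α/(1+2*α*τ^2) with hβ
  have hβ0 : 0 < β := by positivity
  have h1 : ∀ a : ℝ, -β * a^2 = -(β*a^2) + (0:ℝ)*a := by intro a; ring
  have h2 : ∀ a : ℝ, ENNReal.ofReal ((Real.sqrt (1 + 2*α*τ^2))⁻¹ * rexp (-β * a^2))
      = ENNReal.ofReal (Real.sqrt (1 + 2*α*τ^2))⁻¹ * ENNReal.ofReal (rexp (-(β*a^2) + (0:ℝ)*a)) := by
    intro a
    rw [ENNReal.ofReal_mul (by positivity), h1 a, ENNReal.ofReal_inv_of_pos (by positivity)]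
  simp_rw [h2]
  rw [lintegral_const_mul _ (by fun_prop),
    gaussL hτ2 hβ0.le, ← ENNReal.ofReal_mul (by positivity)]
  congr 1
  norm_num
end
lemma finalAlg {σ τ : ℝ} (hσ : 0 < σ) (hτ : 0 < τ) (d : ℕ) :
    ((Real.sqrt (1 + τ^2/(2*σ^2)))⁻¹)^d ≤ ((1 + 2*τ^2/σ^2) / (1 + τ^2/σ^2)^2) ^ ((d:ℝ)/4) := by
  have hσ2 : (0:ℝ) < σ^2 := by positivity
  have hτ2 : (0:ℝ) < τ^2 := by positivity
  set u : ℝ := 1 + τ^2/(2*σ^2) with hu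
  have hu0 : (0:ℝ) < u := by positivity
  have h1 : ((Real.sqrt u)⁻¹)^d = u ^ (-(1:ℝ)/2 * d) := by
    rw [Real.rpow_mul hu0.le, Real.rpow_natCast]
    congr 1
    rw [show (-(1:ℝ)/2) = -(1/2) by norm_num, Real.rpow_neg hu0.le, Real.sqrt_eq_rpow]
  have h2 : u ^ (-(1:ℝ)/2 * d) = (u ^ (-2:ℝ)) ^ ((d:ℝ)/4) := by
    rw [← Real.rpow_mul hu0.le]
    congr 1
    ring
  have h3 : u ^ (-2:ℝ) ≤ (1 + 2*τ^2/σ^2)/(1 + τ^2/σ^2)^2 := by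
    have he : u ^ (-2:ℝ) = (u^2)⁻¹ := by
      rw [show (-2:ℝ) = -((2:ℕ):ℝ) by norm_num, Real.rpow_neg hu0.le, Real.rpow_natCast]
    rw [he, inv_eq_one_div, div_le_div_iff₀ (by positivity) (by positivity), hu]
    have key : σ^2*σ^2*σ^2 * ((1 + 2*τ^2/σ^2) * (1 + τ^2/(2*σ^2))^2 - (1 + τ^2/σ^2)^2)
        = σ^2*σ^2*σ^2 * (τ^2/σ^2 + 5*(τ^2/σ^2)^2/4 + (τ^2/σ^2)^3/2) := by
      field_simp
      ring
    nlinarith [mul_pos (mul_pos hσ2 hσ2) hσ2, mul_pos hτ2 hτ2,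
      div_pos hτ2 hσ2, pow_pos (div_pos hτ2 hσ2) 2, pow_pos (div_pos hτ2 hσ2) 3]
  rw [h1, h2]
  exact Real.rpow_le_rpow (by positivity) h3 (by positivity)
theorem stmt_5 {Ω : Type*} [MeasurableSpace Ω] (P : Measure Ω) [IsProbabilityMeasure P]
    (d : ℕ) (hd : 1 ≤ d) (τ σ : ℝ) (hτ : 0 < τ) (hσ : 0 < σ)
    (μT μW ξ : Ω → (Fin d → ℝ))
    (hμT : Measure.map μT P = Measure.pi fun _ => gaussianReal 0 (τ ^ 2).toNNReal)
    (hμW : Measure.map μW P = Measure.pi fun _ => gaussianReal 0 (τ ^ 2).toNNReal)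
    (hξ : Measure.map ξ P = Measure.pi fun _ => gaussianReal 0 (σ ^ 2).toNNReal)
    (hindep : iIndepFun ![μT, μW, ξ] P)
    (x : Ω → Fin d → ℝ) (hx : ∀ ω i, x ω i = μT ω i + ξ ω i) :
    (P {ω | ∑ i, (x ω i - μW ω i) ^ 2 - ∑ i, (x ω i - μT ω i) ^ 2 ≤ 0}).toReal ≤
      ((1 + 2 * τ ^ 2 / σ ^ 2) / (1 + τ ^ 2 / σ ^ 2) ^ 2) ^ ((d : ℝ) / 4) := by
  have hσ2 : (0:ℝ) < σ^2 := by positivity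
  have hτ2 : (0:ℝ) < τ^2 := by positivity
  -- ae-measurability
  have haT : AEMeasurable μT P := by
    by_contra hc
    rw [Measure.map_of_not_aemeasurable hc] at hμT
    have h0 := congrArg (fun m : Measure (Fin d → ℝ) => m Set.univ) hμT
    simp [measure_univ] at h0
  have haW : AEMeasurable μW P := by
    by_contra hc
    rw [Measure.map_of_not_aemeasurable hc] at hμW
    have h0 := congrArg (fun m : Measure (Fin d → ℝ) => m Set.univ) hμW
    simp [measure_univ] at h0
  have haX : AEMeasurable ξ P := by
    by_contra hc
    rw [Measure.map_of_not_aemeasurable hc] at hξ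
    have h0 := congrArg (fun m : Measure (Fin d → ℝ) => m Set.univ) hξ
    simp [measure_univ] at h0
  set T := haT.mk μT with hTdef
  set W := haW.mk μW with hWdef
  set X := haX.mk ξ with hXdef
  have hTm : Measurable T := haT.measurable_mk
  have hWm : Measurable W := haW.measurable_mk
  have hXm : Measurable X := haX.measurable_mk
  have hTae : μT =ᵐ[P] T := haT.ae_eq_mk
  have hWae : μW =ᵐ[P] W := haW.ae_eq_mk
  have hXae : ξ =ᵐ[P] X := haX.ae_eq_mk
  have hmT : Measure.map T P = Measure.pi fun _ => gaussianReal 0 (τ^2).toNNReal := by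
    rw [← Measure.map_congr hTae]; exact hμT
  have hmW : Measure.map W P = Measure.pi fun _ => gaussianReal 0 (τ^2).toNNReal := by
    rw [← Measure.map_congr hWae]; exact hμW
  have hmX : Measure.map X P = Measure.pi fun _ => gaussianReal 0 (σ^2).toNNReal := by
    rw [← Measure.map_congr hXae]; exact hξ
  have hindep' : iIndepFun ![T, W, X] P := by
    refine iIndepFun_congr_ae hindep fun i => ?_
    fin_cases i
    · simpa using hTae
    · simpa using hWae
    · simpa using hXae
  have hmeas3 : ∀ i : Fin 3, Measurable (![T, W, X] i) := by
    intro i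
    fin_cases i
    · simpa using hTm
    · simpa using hWm
    · simpa using hXm
  -- joint law
  have h01 : IndepFun T W P := by
    have h := hindep'.indepFun (i := 0) (j := 1) (by decide)
    simpa using h
  have hmTW : Measure.map (fun ω => (T ω, W ω)) P
      = (Measure.pi fun _ : Fin d => gaussianReal 0 (τ^2).toNNReal).prod
        (Measure.pi fun _ : Fin d => gaussianReal 0 (τ^2).toNNReal) := by
    rw [(indepFun_iff_map_prod_eq_prod_map_map hTm.aemeasurable hWm.aemeasurable).1 h01,
      hmT, hmW]
  have hPWX : IndepFun (fun ω => (T ω, W ω)) X P := by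
    have h := hindep'.indepFun_prodMk hmeas3 0 1 2 (by decide) (by decide)
    simpa using h
  have hmW3 : Measure.map (fun ω => ((T ω, W ω), X ω)) P
      = ((Measure.pi fun _ : Fin d => gaussianReal 0 (τ^2).toNNReal).prod
          (Measure.pi fun _ : Fin d => gaussianReal 0 (τ^2).toNNReal)).prod
        (Measure.pi fun _ : Fin d => gaussianReal 0 (σ^2).toNNReal) := by
    rw [(indepFun_iff_map_prod_eq_prod_map_map
      (hTm.prodMk hWm).aemeasurable hXm.aemeasurable).1 hPWX, hmTW, hmX]
  -- event
  set Y : Ω → ℝ := fun ω => ∑ i, ((T ω i + X ω i - W ω i)^2 - (X ω i)^2) with hYdef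
  have hYm : Measurable Y := by
    apply Finset.measurable_sum
    intro i _
    have h1 : Measurable fun ω => T ω i := (measurable_pi_apply i).comp hTm
    have h2 : Measurable fun ω => W ω i := (measurable_pi_apply i).comp hWm
    have h3 : Measurable fun ω => X ω i := (measurable_pi_apply i).comp hXm
    fun_prop
  have hEev : P {ω | ∑ i, (x ω i - μW ω i)^2 - ∑ i, (x ω i - μT ω i)^2 ≤ 0}
      = P {ω | Y ω ≤ 0} := by
    apply measure_congr
    rw [Filter.eventuallyEq_set]
    filter_upwards [hTae, hWae, hXae] with ω h1 h2 h3
    have hkey : ∑ i, (x ω i - μW ω i)^2 - ∑ i, (x ω i - μT ω i)^2 = Y ω := by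
      rw [← Finset.sum_sub_distrib]
      refine Finset.sum_congr rfl fun i _ => ?_
      rw [hx ω i, congrFun h1 i, congrFun h2 i, congrFun h3 i]
      ring
    simp only [Set.mem_setOf_eq, hkey]
  set t : ℝ := (4*σ^2)⁻¹ with htdef
  have ht0 : 0 < t := by positivity
  -- Chernoff
  have hbound : P {ω | Y ω ≤ 0} ≤ ∫⁻ ω, ENNReal.ofReal (rexp (-t * Y ω)) ∂P := by
    have hms : MeasurableSet {ω | Y ω ≤ 0} := measurableSet_le hYm measurable_const
    rw [← lintegral_indicator_one hms]
    refine lintegral_mono fun ω => ?_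
    by_cases hω : ω ∈ {ω | Y ω ≤ 0}
    · rw [Set.indicator_of_mem hω]
      have hY0 : Y ω ≤ 0 := hω
      rw [Pi.one_apply, show (1:ℝ≥0∞) = ENNReal.ofReal (rexp 0) by simp]
      exact ENNReal.ofReal_le_ofReal (Real.exp_le_exp.2 (by nlinarith))
    · rw [Set.indicator_of_notMem hω]; exact zero_le
  -- change of variables
  set Φ : ((Fin d → ℝ) × (Fin d → ℝ)) × (Fin d → ℝ) → ℝ≥0∞ :=
    fun z => ∏ i, ENNReal.ofReal (rexp (-t * ((z.1.1 i + z.2 i - z.1.2 i)^2 - (z.2 i)^2)))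
    with hΦdef
  have hΦm : Measurable Φ := by
    apply Finset.measurable_prod
    intro i _
    fun_prop
  have hstep1 : ∫⁻ ω, ENNReal.ofReal (rexp (-t * Y ω)) ∂P
      = ∫⁻ z, Φ z ∂(((Measure.pi fun _ : Fin d => gaussianReal 0 (τ^2).toNNReal).prod
          (Measure.pi fun _ : Fin d => gaussianReal 0 (τ^2).toNNReal)).prod
        (Measure.pi fun _ : Fin d => gaussianReal 0 (σ^2).toNNReal)) := by
    have hptwise : ∀ ω, ENNReal.ofReal (rexp (-t * Y ω)) = Φ ((T ω, W ω), X ω) := by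
      intro ω
      simp only [hΦdef, hYdef]
      rw [Finset.mul_sum, Real.exp_sum,
        ENNReal.ofReal_prod_of_nonneg (fun i _ => (Real.exp_pos _).le)]
    simp_rw [hptwise]
    rw [← hmW3, lintegral_map hΦm ((hTm.prodMk hWm).prodMk hXm)]
  -- computation
  set α : ℝ := (8*σ^2)⁻¹ with hαdef
  have hα0 : 0 < α := by positivity
  have hdd : (0:ℝ) < 1 + 2*α*τ^2 := by positivity
  set β : ℝ := α/(1+2*α*τ^2) with hβdef
  set c1 : ℝ := (Real.sqrt (1 + 2*α*τ^2))⁻¹ with hc1def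
  set c2 : ℝ := (Real.sqrt (1 + 2*β*τ^2))⁻¹ with hc2def
  have hstep2 : ∫⁻ z, Φ z ∂(((Measure.pi fun _ : Fin d => gaussianReal 0 (τ^2).toNNReal).prod
          (Measure.pi fun _ : Fin d => gaussianReal 0 (τ^2).toNNReal)).prod
        (Measure.pi fun _ : Fin d => gaussianReal 0 (σ^2).toNNReal))
      = (ENNReal.ofReal (c1 * c2))^d := by
    rw [lintegral_prod _ hΦm.aemeasurable]
    have hin : ∀ p : (Fin d → ℝ) × (Fin d → ℝ),
        ∫⁻ c, Φ (p, c) ∂(Measure.pi fun _ : Fin d => gaussianReal 0 (σ^2).toNNReal)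
        = ∏ i, ENNReal.ofReal (rexp (-α * (p.1 i - p.2 i)^2)) := by
      intro p
      rw [lintegral_pi_prod d (gaussianReal 0 (σ^2).toNNReal) inferInstance
        (fun i c' => ENNReal.ofReal (rexp (-t * ((p.1 i + c' - p.2 i)^2 - c'^2))))
        (fun i => by fun_prop)]
      exact Finset.prod_congr rfl fun i _ => scalar1 hσ (p.1 i) (p.2 i)
    simp_rw [hin]
    have hmΨ : Measurable fun p : (Fin d → ℝ) × (Fin d → ℝ) =>
        ∏ i, ENNReal.ofReal (rexp (-α * (p.1 i - p.2 i)^2)) := by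
      apply Finset.measurable_prod; intro i _; fun_prop
    rw [lintegral_prod _ hmΨ.aemeasurable]
    have hin2 : ∀ a : Fin d → ℝ,
        ∫⁻ b, ∏ i, ENNReal.ofReal (rexp (-α * (a i - b i)^2))
          ∂(Measure.pi fun _ : Fin d => gaussianReal 0 (τ^2).toNNReal)
        = ∏ i, ENNReal.ofReal (c1 * rexp (-β * (a i)^2)) := by
      intro a
      rw [lintegral_pi_prod d (gaussianReal 0 (τ^2).toNNReal) inferInstance
        (fun i b' => ENNReal.ofReal (rexp (-α * (a i - b')^2))) (fun i => by fun_prop)]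
      exact Finset.prod_congr rfl fun i _ => scalar2 hσ hτ (a i)
    simp_rw [hin2]
    rw [lintegral_pi_prod d (gaussianReal 0 (τ^2).toNNReal) inferInstance
      (fun i a' => ENNReal.ofReal (c1 * rexp (-β * a'^2))) (fun i => by fun_prop)]
    have : ∀ i : Fin d, (∫⁻ a', ENNReal.ofReal (c1 * rexp (-β * a'^2))
        ∂(gaussianReal 0 (τ^2).toNNReal)) = ENNReal.ofReal (c1 * c2) := fun i =>
      scalar3 hσ hτ
    rw [Finset.prod_congr rfl fun i _ => this i, Finset.prod_const, Finset.card_univ,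
      Fintype.card_fin]
  -- put it together
  have hfinal : P {ω | ∑ i, (x ω i - μW ω i)^2 - ∑ i, (x ω i - μT ω i)^2 ≤ 0}
      ≤ ENNReal.ofReal ((c1*c2)^d) := by
    rw [hEev, ENNReal.ofReal_pow (by positivity)]
    calc P {ω | Y ω ≤ 0} ≤ _ := hbound
      _ = _ := hstep1
      _ = _ := hstep2
  have hto : (P {ω | ∑ i, (x ω i - μW ω i)^2 - ∑ i, (x ω i - μT ω i)^2 ≤ 0}).toReal
      ≤ (c1*c2)^d := ENNReal.toReal_le_of_le_ofReal (by positivity) hfinal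
  refine hto.trans ?_
  have hc : c1 * c2 = (Real.sqrt (1 + τ^2/(2*σ^2)))⁻¹ := by
    rw [hc1def, hc2def, ← mul_inv, ← Real.sqrt_mul (by positivity)]
    congr 2
    rw [hβdef, hαdef]
    field_simp
    ring
  rw [hc]
  exact finalAlg hσ hτ d
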